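/- arXiv:1712.06403 — 3 statements merged into one kernel-verified Lean document; each statement's English description precedes it below -/
import Mathlib

section
/- Let m ≥ 4 be an even integer and let n be an even integer with n ≥ 2m. Then f_m(n) ≤ 2·f_m(n/2) + 2·f_{m−1}(n/2) + 2·f_{m−2}(n/2)·f_2(n/2) + 2·f_{m−3}(n/2)·f_3(n/2) + ⋯ + 2·f_{m/2+1}(n/2)·f_{m/2−1}(n/2) + [f_{m/2}(n/2)]², i.e., f_m(n) ≤ 2·∑_{i=0}^{m/2−1} f_i(n/2)·f_{m−i}(n/2) + [f_{m/2}(n/2)]², where by convention f_0(n/2) = f_1(n/2) = 1. -/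
/-- A complete `r`-partite `r`-graph (a "block") on a finite vertex set `V ⊆ ℕ`:
it is determined by `r` pairwise disjoint nonempty subsets of `V`. -/
structure Block (V : Finset ℕ) (r : ℕ) where
  parts : Fin r → Finset ℕ
  nonempty : ∀ i, (parts i).Nonempty
  subset : ∀ i, parts i ⊆ V
  disj : ∀ i j, i ≠ j → Disjoint (parts i) (parts j)

/-- The edge set of a block: all sets contained in the union of the parts
meeting each part in exactly one vertex. -/
def Block.edges {V : Finset ℕ} {r : ℕ} (B : Block V r) : Set (Finset ℕ) :=
  {X | (∀ i, (X ∩ B.parts i).card = 1) ∧ ∀ x ∈ X, ∃ i, x ∈ B.parts i}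

/-- `ExactCover V r k F` : there are `k` complete `r`-partite `r`-graphs on `V`
whose edge sets are pairwise disjoint and whose union is the family `F`. -/
def ExactCover (V : Finset ℕ) (r k : ℕ) (F : Set (Finset ℕ)) : Prop :=
  ∃ B : Fin k → Block V r,
    (∀ i j, i ≠ j → Disjoint (B i).edges (B j).edges) ∧
    (⋃ i, (B i).edges) = F

/-- `f r n` : the minimum number of complete `r`-partite `r`-graphs needed to
partition the edge set of the complete `r`-uniform hypergraph on `[n]`. -/
noncomputable def f (r n : ℕ) : ℕ :=
  sInf {k | ExactCover (Finset.range n) r k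
    {X | X ⊆ Finset.range n ∧ X.card = r}}

def singleBlock {V : Finset ℕ} {r : ℕ} (X : Finset ℕ) (hX : X ⊆ V) (h : X.card = r) :
    Block V r where
  parts i := {(X.orderIsoOfFin h i : ℕ)}
  nonempty i := Finset.singleton_nonempty _
  subset i := by
    simp only [Finset.singleton_subset_iff]
    exact hX (X.orderIsoOfFin h i).2
  disj i j hij := by
    simp only [Finset.disjoint_singleton]
    exact fun e => hij ((X.orderIsoOfFin h).injective (Subtype.ext e))

lemma singleBlock_edges {V : Finset ℕ} {r : ℕ} (X : Finset ℕ) (hX : X ⊆ V) (h : X.card = r) :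
    (singleBlock X hX h).edges = {X} := by
  ext Y
  simp only [Block.edges, singleBlock, Set.mem_setOf_eq, Set.mem_singleton_iff]
  constructor
  · rintro ⟨h1, h2⟩
    apply Finset.Subset.antisymm
    · intro y hy
      obtain ⟨i, hi⟩ := h2 y hy
      simp only [Finset.mem_singleton] at hi
      subst hi
      exact (X.orderIsoOfFin h i).2
    · intro x hx
      obtain ⟨z, hz⟩ := Finset.card_eq_one.mp (h1 ((X.orderIsoOfFin h).symm ⟨x, hx⟩))
      have hx' : ((X.orderIsoOfFin h) ((X.orderIsoOfFin h).symm ⟨x, hx⟩) : ℕ) = x := by simp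
      rw [hx'] at hz
      have hz' : z ∈ Y ∩ ({x} : Finset ℕ) := hz ▸ Finset.mem_singleton_self z
      rw [Finset.mem_inter, Finset.mem_singleton] at hz'
      rcases hz' with ⟨hzY, rfl⟩
      exact hzY
  · rintro rfl
    constructor
    · intro i
      have he : Y ∩ {(Y.orderIsoOfFin h i : ℕ)} = {(Y.orderIsoOfFin h i : ℕ)} := by
        rw [Finset.inter_eq_right, Finset.singleton_subset_iff]
        exact (Y.orderIsoOfFin h i).2
      rw [he, Finset.card_singleton]
    · intro x hx
      exact ⟨(Y.orderIsoOfFin h).symm ⟨x, hx⟩, by simp⟩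

lemma exists_exactCover (V : Finset ℕ) (r : ℕ) :
    ExactCover V r ((V.powersetCard r).card) {X | X ⊆ V ∧ X.card = r} := by
  classical
  have hmem : ∀ i : Fin (V.powersetCard r).card,
      ((V.powersetCard r).equivFin.symm i : Finset ℕ) ⊆ V ∧
      ((V.powersetCard r).equivFin.symm i : Finset ℕ).card = r := by
    intro i
    have := ((V.powersetCard r).equivFin.symm i).2
    rwa [Finset.mem_powersetCard] at this
  refine ⟨fun i => singleBlock _ (hmem i).1 (hmem i).2, ?_, ?_⟩
  · intro i j hij
    rw [singleBlock_edges, singleBlock_edges, Set.disjoint_singleton]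
    intro e
    exact hij ((V.powersetCard r).equivFin.symm.injective (Subtype.ext e))
  · ext X
    simp only [Set.mem_iUnion, singleBlock_edges, Set.mem_singleton_iff, Set.mem_setOf_eq]
    constructor
    · rintro ⟨i, rfl⟩; exact hmem i
    · intro hx
      refine ⟨(V.powersetCard r).equivFin ⟨X, ?_⟩, ?_⟩
      · rw [Finset.mem_powersetCard]; exact hx
      · simp

lemma f_spec (r n : ℕ) :
    ExactCover (Finset.range n) r (f r n) {X | X ⊆ Finset.range n ∧ X.card = r} := by
  have h : {k | ExactCover (Finset.range n) r k
      {X | X ⊆ Finset.range n ∧ X.card = r}}.Nonempty := ⟨_, exists_exactCover _ _⟩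
  exact Nat.sInf_mem h

def Block.castLE {V W : Finset ℕ} {r : ℕ} (h : V ⊆ W) (B : Block V r) : Block W r :=
  ⟨B.parts, B.nonempty, fun i => (B.subset i).trans h, B.disj⟩

lemma Block.castLE_edges {V W : Finset ℕ} {r : ℕ} (h : V ⊆ W) (B : Block V r) :
    (B.castLE h).edges = B.edges := rfl

def Block.castArity {V : Finset ℕ} {r s : ℕ} (h : r = s) (B : Block V r) : Block V s where
  parts i := B.parts (Fin.cast h.symm i)
  nonempty i := B.nonempty _
  subset i := B.subset _
  disj i j hij := B.disj _ _ fun e => hij (Fin.cast_injective h.symm e)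

lemma Block.castArity_edges {V : Finset ℕ} {r s : ℕ} (h : r = s) (B : Block V r) :
    (B.castArity h).edges = B.edges := by
  subst h
  rfl

def Block.shift {V : Finset ℕ} {r : ℕ} (t : ℕ) (B : Block V r) :
    Block (V.image (· + t)) r where
  parts i := (B.parts i).image (· + t)
  nonempty i := (B.nonempty i).image _
  subset i := Finset.image_subset_image (B.subset i)
  disj i j hij := (Finset.disjoint_image (add_left_injective t)).mpr (B.disj i j hij)

lemma Block.shift_edges {V : Finset ℕ} {r : ℕ} (t : ℕ) (B : Block V r) :
    (B.shift t).edges = (fun Y : Finset ℕ => Y.image (· + t)) '' B.edges := by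
  have hinj : Function.Injective (· + t : ℕ → ℕ) := add_left_injective t
  ext X
  simp only [Block.edges, Block.shift, Set.mem_setOf_eq, Set.mem_image]
  constructor
  · rintro ⟨h1, h2⟩
    have hle : ∀ x ∈ X, t ≤ x := by
      intro x hx
      obtain ⟨i, hi⟩ := h2 x hx
      simp only [Finset.mem_image] at hi
      obtain ⟨y, -, rfl⟩ := hi
      omega
    have hY : (X.image (· - t)).image (· + t) = X := by
      ext z
      simp only [Finset.image_image, Function.comp, Finset.mem_image]
      constructor
      · rintro ⟨x, hx, rfl⟩
        have h3 := hle x hx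
        have h4 : x - t + t = x := by omega
        rwa [h4]
      · intro hz
        exact ⟨z, hz, by have := hle z hz; omega⟩
    refine ⟨X.image (· - t), ⟨?_, ?_⟩, hY⟩
    · intro i
      have e1 : (X.image (· - t) ∩ B.parts i).image (· + t)
          = (X.image (· - t)).image (· + t) ∩ (B.parts i).image (· + t) :=
        Finset.image_inter _ _ hinj
      rw [hY] at e1
      have := h1 i
      rw [← e1] at this
      rwa [Finset.card_image_of_injective _ hinj] at this
    · intro y hy
      have hyX : y + t ∈ X := by
        rw [← hY]
        exact Finset.mem_image_of_mem _ hy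
      obtain ⟨i, hi⟩ := h2 (y + t) hyX
      simp only [Finset.mem_image] at hi
      obtain ⟨w, hw, hwe⟩ := hi
      have : w = y := by omega
      exact ⟨i, this ▸ hw⟩
  · rintro ⟨Y, ⟨g1, g2⟩, rfl⟩
    constructor
    · intro i
      rw [← Finset.image_inter _ _ hinj, Finset.card_image_of_injective _ hinj]
      exact g1 i
    · intro x hx
      simp only [Finset.mem_image] at hx
      obtain ⟨y, hy, rfl⟩ := hx
      obtain ⟨i, hi⟩ := g2 y hy
      exact ⟨i, Finset.mem_image_of_mem _ hi⟩

def Block.combine {A B : Finset ℕ} (hAB : Disjoint A B) {r s : ℕ}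
    (B1 : Block A r) (B2 : Block B s) : Block (A ∪ B) (r + s) where
  parts := Fin.addCases (fun i => B1.parts i) (fun i => B2.parts i)
  nonempty i := by
    induction i using Fin.addCases with
    | left i => simp only [Fin.addCases_left]; exact B1.nonempty i
    | right i => simp only [Fin.addCases_right]; exact B2.nonempty i
  subset i := by
    induction i using Fin.addCases with
    | left i =>
        simp only [Fin.addCases_left]
        exact (B1.subset i).trans Finset.subset_union_left
    | right i =>
        simp only [Fin.addCases_right]
        exact (B2.subset i).trans Finset.subset_union_right
  disj i j hij := by
    induction i using Fin.addCases with
    | left i =>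
        induction j using Fin.addCases with
        | left j =>
            simp only [Fin.addCases_left]
            exact B1.disj i j fun e => hij (by rw [e])
        | right j =>
            simp only [Fin.addCases_left, Fin.addCases_right]
            exact Disjoint.mono (B1.subset i) (B2.subset j) hAB
    | right i =>
        induction j using Fin.addCases with
        | left j =>
            simp only [Fin.addCases_right, Fin.addCases_left]
            exact Disjoint.mono (B2.subset i) (B1.subset j) hAB.symm
        | right j =>
            simp only [Fin.addCases_right]
            exact B2.disj i j fun e => hij (by rw [e])

lemma Block.combine_edges {A B : Finset ℕ} (hAB : Disjoint A B) {r s : ℕ}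
    (B1 : Block A r) (B2 : Block B s) :
    (Block.combine hAB B1 B2).edges
      = {X | X ∩ A ∈ B1.edges ∧ X ∩ B ∈ B2.edges ∧ X ⊆ A ∪ B} := by
  ext X
  have key1 : ∀ i : Fin r, (X ∩ A) ∩ B1.parts i = X ∩ B1.parts i := fun i => by
    rw [Finset.inter_assoc, Finset.inter_eq_right.mpr (B1.subset i)]
  have key2 : ∀ i : Fin s, (X ∩ B) ∩ B2.parts i = X ∩ B2.parts i := fun i => by
    rw [Finset.inter_assoc, Finset.inter_eq_right.mpr (B2.subset i)]
  simp only [Block.edges, Block.combine, Set.mem_setOf_eq]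
  constructor
  · rintro ⟨h1, h2⟩
    have hsub : X ⊆ A ∪ B := by
      intro x hx
      obtain ⟨j, hj⟩ := h2 x hx
      revert hj
      induction j using Fin.addCases with
      | left j =>
          rw [Fin.addCases_left]
          exact fun hj => Finset.mem_union_left _ (B1.subset j hj)
      | right j =>
          rw [Fin.addCases_right]
          exact fun hj => Finset.mem_union_right _ (B2.subset j hj)
    refine ⟨⟨?_, ?_⟩, ⟨?_, ?_⟩, hsub⟩
    · intro i
      have := h1 (Fin.castAdd s i)
      rw [Fin.addCases_left] at this
      rwa [key1]
    · intro x hx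
      rw [Finset.mem_inter] at hx
      obtain ⟨j, hj⟩ := h2 x hx.1
      revert hj
      induction j using Fin.addCases with
      | left j =>
          rw [Fin.addCases_left]
          exact fun hj => ⟨j, hj⟩
      | right j =>
          rw [Fin.addCases_right]
          intro hj
          exact absurd hx.2 (Finset.disjoint_right.mp hAB (B2.subset j hj))
    · intro i
      have := h1 (Fin.natAdd r i)
      rw [Fin.addCases_right] at this
      rwa [key2]
    · intro x hx
      rw [Finset.mem_inter] at hx
      obtain ⟨j, hj⟩ := h2 x hx.1
      revert hj
      induction j using Fin.addCases with
      | left j =>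
          rw [Fin.addCases_left]
          intro hj
          exact absurd hx.2 (Finset.disjoint_left.mp hAB (B1.subset j hj))
      | right j =>
          rw [Fin.addCases_right]
          exact fun hj => ⟨j, hj⟩
  · rintro ⟨⟨a1, a2⟩, ⟨b1, b2⟩, hsub⟩
    constructor
    · intro i
      induction i using Fin.addCases with
      | left i =>
          rw [Fin.addCases_left, ← key1]
          exact a1 i
      | right i =>
          rw [Fin.addCases_right, ← key2]
          exact b1 i
    · intro x hx
      rcases Finset.mem_union.mp (hsub hx) with hA | hB
      · obtain ⟨i, hi⟩ := a2 x (Finset.mem_inter.mpr ⟨hx, hA⟩)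
        exact ⟨Fin.castAdd s i, by rw [Fin.addCases_left]; exact hi⟩
      · obtain ⟨i, hi⟩ := b2 x (Finset.mem_inter.mpr ⟨hx, hB⟩)
        exact ⟨Fin.natAdd r i, by rw [Fin.addCases_right]; exact hi⟩

lemma prod_cover {A B : Finset ℕ} (hAB : Disjoint A B) {r s k l : ℕ} {F1 F2 : Set (Finset ℕ)}
    (h1 : ExactCover A r k F1) (h2 : ExactCover B s l F2) :
    ∃ C : Fin k × Fin l → Block (A ∪ B) (r + s),
      (∀ p q, p ≠ q → Disjoint (C p).edges (C q).edges) ∧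
      (⋃ p, (C p).edges) = {X | X ∩ A ∈ F1 ∧ X ∩ B ∈ F2 ∧ X ⊆ A ∪ B} := by
  obtain ⟨D1, hd1, hu1⟩ := h1
  obtain ⟨D2, hd2, hu2⟩ := h2
  refine ⟨fun p => Block.combine hAB (D1 p.1) (D2 p.2), ?_, ?_⟩
  · intro p q hpq
    rw [Set.disjoint_left]
    intro X hX hX'
    rw [Block.combine_edges] at hX hX'
    by_cases h : p.1 = q.1
    · have h2' : p.2 ≠ q.2 := fun e => hpq (Prod.ext h e)
      exact Set.disjoint_left.mp (hd2 _ _ h2') hX.2.1 hX'.2.1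
    · exact Set.disjoint_left.mp (hd1 _ _ h) hX.1 hX'.1
  · ext X
    simp only [Set.mem_iUnion, Block.combine_edges, Set.mem_setOf_eq]
    constructor
    · rintro ⟨p, hA', hB', hs⟩
      exact ⟨hu1 ▸ Set.mem_iUnion.mpr ⟨p.1, hA'⟩, hu2 ▸ Set.mem_iUnion.mpr ⟨p.2, hB'⟩, hs⟩
    · rintro ⟨hFA, hFB, hs⟩
      rw [← hu1, Set.mem_iUnion] at hFA
      rw [← hu2, Set.mem_iUnion] at hFB
      obtain ⟨i, hi⟩ := hFA
      obtain ⟨j, hj⟩ := hFB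
      exact ⟨(i, j), hi, hj, hs⟩

lemma shifted_family (q s : ℕ) :
    {X : Finset ℕ | X ⊆ (Finset.range q).image (· + q) ∧ X.card = s}
      = (fun Y : Finset ℕ => Y.image (· + q)) '' {Y | Y ⊆ Finset.range q ∧ Y.card = s} := by
  ext X
  simp only [Set.mem_setOf_eq, Set.mem_image]
  constructor
  · rintro ⟨hsub, hcard⟩
    have hle : ∀ x ∈ X, q ≤ x ∧ x < 2 * q := by
      intro x hx
      have h := hsub hx
      simp only [Finset.mem_image, Finset.mem_range] at h
      obtain ⟨y, hy, rfl⟩ := h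
      omega
    have hY : (X.image (· - q)).image (· + q) = X := by
      ext z
      simp only [Finset.image_image, Function.comp, Finset.mem_image]
      constructor
      · rintro ⟨x, hx, rfl⟩
        have h3 := (hle x hx).1
        have h4 : x - q + q = x := by omega
        rwa [h4]
      · intro hz
        exact ⟨z, hz, by have := (hle z hz).1; omega⟩
    refine ⟨X.image (· - q), ⟨?_, ?_⟩, hY⟩
    · intro y hy
      simp only [Finset.mem_image] at hy
      obtain ⟨x, hx, rfl⟩ := hy
      simp only [Finset.mem_range]
      have := hle x hx
      omega
    · rw [Finset.card_image_of_injOn, hcard]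
      intro x hx y hy e
      have h1 := (hle x hx).1
      have h2 := (hle y hy).1
      simp only at e
      omega
  · rintro ⟨Y, ⟨hY1, hY2⟩, rfl⟩
    refine ⟨Finset.image_subset_image hY1, ?_⟩
    rw [Finset.card_image_of_injective _ (add_left_injective q), hY2]

lemma shift_cover {q s l : ℕ}
    (h : ExactCover (Finset.range q) s l {X | X ⊆ Finset.range q ∧ X.card = s}) :
    ExactCover ((Finset.range q).image (· + q)) s l
      {X | X ⊆ (Finset.range q).image (· + q) ∧ X.card = s} := by
  obtain ⟨D, hd, hu⟩ := h
  refine ⟨fun i => (D i).shift q, ?_, ?_⟩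
  · intro i j hij
    rw [Block.shift_edges, Block.shift_edges]
    exact Set.disjoint_image_of_injective
      (Finset.image_injective (add_left_injective q)) (hd i j hij)
  · rw [shifted_family, ← hu]
    simp only [Block.shift_edges]
    rw [← Set.image_iUnion]

lemma exactCover_of_equiv {V : Finset ℕ} {r k : ℕ} {F : Set (Finset ℕ)} {ι : Type}
    (e : Fin k ≃ ι) (Bl : ι → Block V r)
    (hd : ∀ i j, i ≠ j → Disjoint (Bl i).edges (Bl j).edges)
    (hu : (⋃ i, (Bl i).edges) = F) : ExactCover V r k F := by
  refine ⟨fun i => Bl (e i), fun i j hij => hd _ _ (fun h => hij (e.injective h)), ?_⟩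
  rw [← hu]
  exact e.surjective.iUnion_comp (fun i => (Bl i).edges)

theorem f_even_recurrence (m n : ℕ) (hm : 4 ≤ m) (hme : Even m) (hne : Even n) (hn : 2 * m ≤ n) :
    f m n ≤ 2 * (∑ i ∈ Finset.range (m / 2), f i (n / 2) * f (m - i) (n / 2))
      + (f (m / 2) (n / 2)) ^ 2 := by
  obtain ⟨c', hc'⟩ := hme
  obtain ⟨q', hq'⟩ := hne
  set q := n / 2 with hqdef
  set c := m / 2 with hcdef
  have hq2 : 2 * q = n := by omega
  have hc2 : 2 * c = m := by omega
  have hmq : m ≤ q := by omega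
  set A := Finset.range q with hA
  set Bq := (Finset.range q).image (· + q) with hBq
  have hAB : Disjoint A Bq := by
    rw [Finset.disjoint_left]
    intro x hx hx'
    rw [hA, Finset.mem_range] at hx
    rw [hBq, Finset.mem_image] at hx'
    obtain ⟨y, hy, rfl⟩ := hx'
    omega
  have hUnion : A ∪ Bq = Finset.range n := by
    ext x
    simp only [hA, hBq, Finset.mem_union, Finset.mem_image, Finset.mem_range]
    constructor
    · rintro (h | ⟨y, hy, rfl⟩) <;> omega
    · intro h
      by_cases hx : x < q
      · exact Or.inl hx
      · exact Or.inr ⟨x - q, by omega, by omega⟩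
  have key : ∀ r : Fin (m+1),
      ∃ C : Fin (f r q) × Fin (f (m - r) q) → Block (Finset.range n) m,
      (∀ p p', p ≠ p' → Disjoint (C p).edges (C p').edges) ∧
      (⋃ p, (C p).edges)
        = {X | X ∩ A ∈ {Y : Finset ℕ | Y ⊆ A ∧ Y.card = (r : ℕ)}
            ∧ X ∩ Bq ∈ {Y : Finset ℕ | Y ⊆ Bq ∧ Y.card = m - (r : ℕ)} ∧ X ⊆ A ∪ Bq} := by
    intro r
    obtain ⟨C, hCd, hCu⟩ := prod_cover hAB (f_spec r q) (shift_cover (f_spec (m - (r : ℕ)) q))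
    have harity : (r : ℕ) + (m - (r : ℕ)) = m := by have := r.isLt; omega
    refine ⟨fun p => ((C p).castArity harity).castLE (fun x hx => hUnion ▸ hx), ?_, ?_⟩
    · intro p p' hpp
      rw [Block.castLE_edges, Block.castLE_edges, Block.castArity_edges, Block.castArity_edges]
      exact hCd p p' hpp
    · simp only [Block.castLE_edges, Block.castArity_edges]
      exact hCu
  choose C hCd hCu using key
  have hdisj : ∀ x y : (Σ r : Fin (m+1), Fin (f r q) × Fin (f (m - r) q)),
      x ≠ y → Disjoint (C x.1 x.2).edges (C y.1 y.2).edges := by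
    rintro ⟨r, p⟩ ⟨r', p'⟩ hxy
    by_cases hrr : r = r'
    · subst hrr
      exact hCd r p p' (fun e => hxy (by rw [e]))
    · rw [Set.disjoint_left]
      intro X hX hX'
      have h1 : X ∈ ⋃ p, (C r p).edges := Set.mem_iUnion.mpr ⟨p, hX⟩
      have h2 : X ∈ ⋃ p, (C r' p).edges := Set.mem_iUnion.mpr ⟨p', hX'⟩
      rw [hCu] at h1
      rw [hCu] at h2
      exact hrr (Fin.ext (by rw [← h1.1.2, ← h2.1.2]))
  have huni : (⋃ x : (Σ r : Fin (m+1), Fin (f r q) × Fin (f (m - r) q)), (C x.1 x.2).edges)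
      = {X : Finset ℕ | X ⊆ Finset.range n ∧ X.card = m} := by
    ext X
    simp only [Set.mem_iUnion, Set.mem_setOf_eq, Sigma.exists, Prod.exists]
    constructor
    · rintro ⟨r, p1, p2, hX⟩
      have h1 : X ∈ ⋃ p, (C r p).edges := Set.mem_iUnion.mpr ⟨(p1, p2), hX⟩
      rw [hCu] at h1
      obtain ⟨⟨hA1, hA2⟩, ⟨hB1, hB2⟩, hsub⟩ := h1
      have hXsplit : (X ∩ A) ∪ (X ∩ Bq) = X := by
        rw [← Finset.inter_union_distrib_left, Finset.inter_eq_left.mpr hsub]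
      have hdisj2 : Disjoint (X ∩ A) (X ∩ Bq) :=
        Disjoint.mono Finset.inter_subset_right Finset.inter_subset_right hAB
      refine ⟨by rw [← hUnion]; exact hsub, ?_⟩
      have hcu := Finset.card_union_of_disjoint hdisj2
      rw [hXsplit] at hcu
      rw [hcu, hA2, hB2]
      have := r.isLt
      omega
    · rintro ⟨hsub, hcard⟩
      have hsub' : X ⊆ A ∪ Bq := by rw [hUnion]; exact hsub
      have hrle : (X ∩ A).card ≤ m := by
        calc (X ∩ A).card ≤ X.card := Finset.card_le_card Finset.inter_subset_left
        _ = m := hcard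
      have hXsplit : (X ∩ A) ∪ (X ∩ Bq) = X := by
        rw [← Finset.inter_union_distrib_left, Finset.inter_eq_left.mpr hsub']
      have hdisj2 : Disjoint (X ∩ A) (X ∩ Bq) :=
        Disjoint.mono Finset.inter_subset_right Finset.inter_subset_right hAB
      have hcards : (X ∩ A).card + (X ∩ Bq).card = m := by
        have hcu := Finset.card_union_of_disjoint hdisj2
        rw [hXsplit] at hcu
        omega
      have hXmem : X ∈ ⋃ p : Fin (f (X ∩ A).card q) × Fin (f (m - (X ∩ A).card) q),
          (C ⟨(X ∩ A).card, by omega⟩ p).edges := by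
        rw [hCu ⟨(X ∩ A).card, by omega⟩]
        refine ⟨⟨Finset.inter_subset_right, rfl⟩, ⟨Finset.inter_subset_right, ?_⟩, hsub'⟩
        show (X ∩ Bq).card = m - (X ∩ A).card
        omega
      obtain ⟨p, hp⟩ := Set.mem_iUnion.mp hXmem
      exact ⟨⟨(X ∩ A).card, by omega⟩, p.1, p.2, hp⟩
  have hcard : Fintype.card (Σ r : Fin (m+1), Fin (f r q) × Fin (f (m - r) q))
      = ∑ r ∈ Finset.range (m+1), f r q * f (m - r) q := by
    rw [Fintype.card_sigma]
    simp only [Fintype.card_prod, Fintype.card_fin]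
    exact Fin.sum_univ_eq_sum_range (fun r => f r q * f (m - r) q) (m+1)
  have hcover : ExactCover (Finset.range n) m
      (∑ r ∈ Finset.range (m+1), f r q * f (m - r) q)
      {X | X ⊆ Finset.range n ∧ X.card = m} :=
    exactCover_of_equiv (Fintype.equivFinOfCardEq hcard).symm (fun x => C x.1 x.2) hdisj huni
  have hle : f m n ≤ ∑ r ∈ Finset.range (m+1), f r q * f (m - r) q := Nat.sInf_le hcover
  have harith : ∑ r ∈ Finset.range (m+1), f r q * f (m - r) q
      = 2 * (∑ i ∈ Finset.range c, f i q * f (m - i) q) + (f c q) ^ 2 := by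
    have h1 : ∑ r ∈ Finset.range (m+1), f r q * f (m - r) q
        = ∑ r ∈ Finset.range (c+1), f r q * f (m - r) q
          + ∑ r ∈ Finset.Ico (c+1) (m+1), f r q * f (m - r) q := by
      rw [Finset.range_eq_Ico, ← Finset.sum_Ico_consecutive _ (Nat.zero_le (c+1)) (by omega),
        ← Finset.range_eq_Ico]
    have h2 : ∑ r ∈ Finset.range (c+1), f r q * f (m - r) q
        = ∑ r ∈ Finset.range c, f r q * f (m - r) q + f c q * f (m - c) q :=
      Finset.sum_range_succ _ c
    have h3 : ∑ r ∈ Finset.Ico (c+1) (m+1), f r q * f (m - r) q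
        = ∑ r ∈ Finset.range c, f r q * f (m - r) q := by
      rw [Finset.sum_Ico_eq_sum_range]
      have hlen : m + 1 - (c + 1) = c := by omega
      rw [hlen, ← Finset.sum_range_reflect (fun j => f j q * f (m - j) q) c]
      refine Finset.sum_congr rfl ?_
      intro j hj
      rw [Finset.mem_range] at hj
      have e1 : m - (c + 1 + j) = c - 1 - j := by omega
      have e2 : m - (c - 1 - j) = c + 1 + j := by omega
      rw [e1, e2]
      ring
    have hmc : m - c = c := by omega
    rw [h1, h2, h3, hmc, sq]
    ring
  rw [harith] at hle
  exact hle
end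

section
/- Let S and T be disjoint finite sets and let a, b ≥ 1 with a ≤ |S| and b ≤ |T|. Then the family (S choose a) × (T choose b) can be exactly covered using at most f_a(|S|) · f_b(|T|) complete (a+b)-partite (a+b)-graphs on S ∪ T. -/
lemma Block.edges_subset {V : Finset ℕ} {r : ℕ} (B : Block V r) {X : Finset ℕ}
    (hX : X ∈ B.edges) : X ⊆ V := fun x hx => by
  obtain ⟨i, hi⟩ := hX.2 x hx
  exact B.subset i hi

/-- the trivial block with edge set `{X}` -/
def singletonBlock (V : Finset ℕ) (r : ℕ) (X : Finset ℕ) (hX : X ⊆ V)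
    (hcard : X.card = r) : Block V r where
  parts i := {X.orderEmbOfFin hcard i}
  nonempty i := ⟨_, Finset.mem_singleton_self _⟩
  subset i := by
    intro x hx
    rw [Finset.mem_singleton] at hx
    exact hX (hx ▸ X.orderEmbOfFin_mem hcard i)
  disj i j hij := by
    simp only [Finset.disjoint_singleton_left, Finset.mem_singleton]
    exact fun h => hij ((X.orderEmbOfFin hcard).injective h)

lemma singletonBlock_parts (V : Finset ℕ) (r : ℕ) (X : Finset ℕ) (hX : X ⊆ V)
    (hcard : X.card = r) (i : Fin r) :
    (singletonBlock V r X hX hcard).parts i = {X.orderEmbOfFin hcard i} := rfl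

lemma singletonBlock_edges (V : Finset ℕ) (r : ℕ) (X : Finset ℕ) (hX : X ⊆ V)
    (hcard : X.card = r) : (singletonBlock V r X hX hcard).edges = {X} := by
  have hXmem : X ∈ (singletonBlock V r X hX hcard).edges := by
    constructor
    · intro i
      rw [singletonBlock_parts, Finset.inter_comm,
        Finset.singleton_inter_of_mem (X.orderEmbOfFin_mem hcard i),
        Finset.card_singleton]
    · intro x hx
      have : x ∈ Set.range ⇑(X.orderEmbOfFin hcard) := by
        rw [Finset.range_orderEmbOfFin]; exact hx
      obtain ⟨i, hi⟩ := this
      exact ⟨i, by rw [singletonBlock_parts, Finset.mem_singleton, hi]⟩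
  ext Y
  simp only [Set.mem_singleton_iff]
  constructor
  · rintro ⟨h1, h2⟩
    apply Finset.Subset.antisymm
    · intro y hy
      obtain ⟨i, hi⟩ := h2 y hy
      rw [singletonBlock_parts, Finset.mem_singleton] at hi
      exact hi ▸ X.orderEmbOfFin_mem hcard i
    · intro x hx
      have : x ∈ Set.range ⇑(X.orderEmbOfFin hcard) := by
        rw [Finset.range_orderEmbOfFin]; exact hx
      obtain ⟨i, hi⟩ := this
      have h1i := h1 i
      rw [Finset.card_eq_one] at h1i
      obtain ⟨z, hz⟩ := h1i
      have hz' : z ∈ Y ∩ (singletonBlock V r X hX hcard).parts i := by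
        rw [hz]; exact Finset.mem_singleton_self z
      rw [Finset.mem_inter, singletonBlock_parts, Finset.mem_singleton] at hz'
      rw [← hi, ← hz'.2]
      exact hz'.1
  · rintro rfl
    exact hXmem

lemma exists_exactCover_s5 (r n : ℕ) :
    {k | ExactCover (Finset.range n) r k
      {X | X ⊆ Finset.range n ∧ X.card = r}}.Nonempty := by
  classical
  set P := (Finset.range n).powersetCard r with hP
  have hmem : ∀ X ∈ P, X ⊆ Finset.range n ∧ X.card = r := by
    intro X hXP; exact Finset.mem_powersetCard.1 hXP
  refine ⟨P.card, fun i =>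
    singletonBlock _ r (P.equivFin.symm i : Finset ℕ)
      (hmem _ (P.equivFin.symm i).2).1 (hmem _ (P.equivFin.symm i).2).2, ?_, ?_⟩
  · intro i j hij
    rw [singletonBlock_edges, singletonBlock_edges, Set.disjoint_singleton_left,
      Set.mem_singleton_iff]
    intro h
    exact hij (P.equivFin.symm.injective (Subtype.ext h))
  · ext X
    simp only [Set.mem_iUnion, singletonBlock_edges, Set.mem_singleton_iff, Set.mem_setOf_eq]
    constructor
    · rintro ⟨i, rfl⟩
      exact hmem _ (P.equivFin.symm i).2
    · intro hX
      have hXP : X ∈ P := Finset.mem_powersetCard.2 hX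
      exact ⟨P.equivFin ⟨X, hXP⟩, by simp⟩

section Map
variable {V S : Finset ℕ} {r : ℕ} (g : ℕ → ℕ)

/-- image of a block under a map injective on `V` -/
def Block.mapFun (B : Block V r) (hg : Set.InjOn g V) (hS : V.image g = S) :
    Block S r where
  parts i := (B.parts i).image g
  nonempty i := (B.nonempty i).image g
  subset i := hS ▸ Finset.image_subset_image (B.subset i)
  disj i j hij := by
    have hd := B.disj i j hij
    rw [Finset.disjoint_left] at hd ⊢
    rintro x hx hx'
    obtain ⟨u, hu, rfl⟩ := Finset.mem_image.1 hx
    obtain ⟨v, hv, hvu⟩ := Finset.mem_image.1 hx'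
    have : v = u := hg (B.subset j hv) (B.subset i hu) hvu
    exact hd hu (this ▸ hv)

lemma image_inter_of_subsets {A C : Finset ℕ} (hg : Set.InjOn g V)
    (hA : A ⊆ V) (hC : C ⊆ V) :
    (A ∩ C).image g = A.image g ∩ C.image g :=
  Finset.image_inter_of_injOn _ _ (hg.mono (by
    rw [Set.union_subset_iff]
    exact ⟨Finset.coe_subset.2 hA, Finset.coe_subset.2 hC⟩))

lemma image_injOn_subsets {A C : Finset ℕ} (hg : Set.InjOn g V)
    (hA : A ⊆ V) (hC : C ⊆ V) (h : A.image g = C.image g) : A = C := by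
  apply Finset.Subset.antisymm <;> intro x hx
  · have : g x ∈ C.image g := h ▸ Finset.mem_image_of_mem g hx
    obtain ⟨u, hu, huu⟩ := Finset.mem_image.1 this
    exact hg (hC hu) (hA hx) huu ▸ hu
  · have : g x ∈ A.image g := h ▸ Finset.mem_image_of_mem g hx
    obtain ⟨u, hu, huu⟩ := Finset.mem_image.1 this
    exact hg (hA hu) (hC hx) huu ▸ hu

lemma Block.mapFun_edges (B : Block V r) (hg : Set.InjOn g V) (hS : V.image g = S) :
    (B.mapFun g hg hS).edges = Finset.image g '' B.edges := by
  classical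
  ext Y
  constructor
  · rintro ⟨h1, h2⟩
    set X : Finset ℕ := V.filter (fun x => g x ∈ Y) with hXdef
    have hXV : X ⊆ V := Finset.filter_subset _ _
    have hYim : Y = X.image g := by
      apply Finset.Subset.antisymm
      · intro y hy
        obtain ⟨i, hi⟩ := h2 y hy
        obtain ⟨u, hu, rfl⟩ := Finset.mem_image.1 hi
        exact Finset.mem_image_of_mem g
          (Finset.mem_filter.2 ⟨B.subset i hu, hy⟩)
      · intro y hy
        obtain ⟨u, hu, rfl⟩ := Finset.mem_image.1 hy
        exact (Finset.mem_filter.1 hu).2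
    refine ⟨X, ⟨?_, ?_⟩, hYim.symm⟩
    · intro i
      have key : (X ∩ B.parts i).image g = Y ∩ (B.parts i).image g := by
        rw [image_inter_of_subsets g hg hXV (B.subset i), ← hYim]
      have h1i := h1 i
      have hparts : (B.mapFun g hg hS).parts i = (B.parts i).image g := rfl
      rw [hparts] at h1i
      rw [← h1i, ← key]
      exact Eq.symm <| Finset.card_image_of_injOn (hg.mono (Finset.coe_subset.2
        (Finset.inter_subset_left.trans hXV)))
    · intro x hx
      have hgx : g x ∈ Y := (Finset.mem_filter.1 hx).2
      obtain ⟨i, hi⟩ := h2 (g x) hgx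
      obtain ⟨u, hu, huu⟩ := Finset.mem_image.1 hi
      exact ⟨i, hg (B.subset i hu) (Finset.mem_filter.1 hx).1 huu ▸ hu⟩
  · rintro ⟨X, ⟨h1, h2⟩, rfl⟩
    have hXV : X ⊆ V := fun x hx => by
      obtain ⟨i, hi⟩ := h2 x hx; exact B.subset i hi
    constructor
    · intro i
      have key : (X.image g) ∩ ((B.parts i).image g) = (X ∩ B.parts i).image g :=
        (image_inter_of_subsets g hg hXV (B.subset i)).symm
      show ((X.image g) ∩ ((B.parts i).image g)).card = 1
      rw [key, Finset.card_image_of_injOn (hg.mono (Finset.coe_subset.2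
        (Finset.inter_subset_left.trans hXV)))]
      exact h1 i
    · intro y hy
      obtain ⟨x, hx, rfl⟩ := Finset.mem_image.1 hy
      obtain ⟨i, hi⟩ := h2 x hx
      exact ⟨i, Finset.mem_image_of_mem g hi⟩

lemma ExactCover.map {k : ℕ} {F : Set (Finset ℕ)} (hg : Set.InjOn g V)
    (hS : V.image g = S) (h : ExactCover V r k F) :
    ExactCover S r k (Finset.image g '' F) := by
  obtain ⟨B, hdisj, hU⟩ := h
  refine ⟨fun i => (B i).mapFun g hg hS, ?_, ?_⟩
  · intro i j hij
    rw [Set.disjoint_left]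
    intro Y hYi hYj
    rw [Block.mapFun_edges] at hYi hYj
    obtain ⟨Xi, hXi, rfl⟩ := hYi
    obtain ⟨Xj, hXj, hXj'⟩ := hYj
    have : Xj = Xi := image_injOn_subsets g hg ((B j).edges_subset hXj)
      ((B i).edges_subset hXi) hXj'
    exact Set.disjoint_left.1 (hdisj i j hij) hXi (this ▸ hXj)
  · simp only [Block.mapFun_edges, ← Set.image_iUnion, hU]

end Map

section Prod
variable {S T : Finset ℕ} {a b : ℕ}

/-- product of a block on `S` and a block on `T` -/
def prodBlock (B : Block S a) (C : Block T b) (hST : Disjoint S T) :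
    Block (S ∪ T) (a + b) where
  parts i := Sum.elim B.parts C.parts (finSumFinEquiv.symm i)
  nonempty i := by
    beta_reduce
    rcases h : finSumFinEquiv.symm i with x | x
    · exact B.nonempty x
    · exact C.nonempty x
  subset i := by
    beta_reduce
    rcases h : finSumFinEquiv.symm i with x | x
    · exact (B.subset x).trans Finset.subset_union_left
    · exact (C.subset x).trans Finset.subset_union_right
  disj i j hij := by
    have hne : finSumFinEquiv.symm i ≠ finSumFinEquiv.symm j :=
      fun h => hij (finSumFinEquiv.symm.injective h)
    beta_reduce
    rcases hi : finSumFinEquiv.symm i with x | x <;>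
      rcases hj : finSumFinEquiv.symm j with y | y <;>
      simp only [Sum.elim_inl, Sum.elim_inr]
    · exact B.disj x y (by rintro rfl; exact hne (hi.trans hj.symm))
    · exact Finset.disjoint_coe.1 <| Set.disjoint_of_subset
        (Finset.coe_subset.2 (B.subset x)) (Finset.coe_subset.2 (C.subset y))
        (Finset.disjoint_coe.2 hST)
    · exact Finset.disjoint_coe.1 <| Set.disjoint_of_subset
        (Finset.coe_subset.2 (C.subset x)) (Finset.coe_subset.2 (B.subset y))
        (Finset.disjoint_coe.2 hST.symm)
    · exact C.disj x y (by rintro rfl; exact hne (hi.trans hj.symm))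

lemma prodBlock_parts_inl (B : Block S a) (C : Block T b) (hST : Disjoint S T)
    (i : Fin a) : (prodBlock B C hST).parts (finSumFinEquiv (Sum.inl i)) = B.parts i := by
  simp [prodBlock]

lemma prodBlock_parts_inr (B : Block S a) (C : Block T b) (hST : Disjoint S T)
    (j : Fin b) : (prodBlock B C hST).parts (finSumFinEquiv (Sum.inr j)) = C.parts j := by
  simp [prodBlock]

lemma prodBlock_edges (B : Block S a) (C : Block T b) (hST : Disjoint S T) :
    (prodBlock B C hST).edges
      = {X | X ⊆ S ∪ T ∧ X ∩ S ∈ B.edges ∧ X ∩ T ∈ C.edges} := by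
  have hBS : ∀ i, B.parts i ⊆ S := B.subset
  have hCT : ∀ j, C.parts j ⊆ T := C.subset
  have hinterS : ∀ (X : Finset ℕ) (i : Fin a), (X ∩ S) ∩ B.parts i = X ∩ B.parts i := by
    intro X i
    rw [Finset.inter_assoc, Finset.inter_eq_right.2 (hBS i)]
  have hinterT : ∀ (X : Finset ℕ) (j : Fin b), (X ∩ T) ∩ C.parts j = X ∩ C.parts j := by
    intro X j
    rw [Finset.inter_assoc, Finset.inter_eq_right.2 (hCT j)]
  ext X
  simp only [Set.mem_setOf_eq]
  constructor
  · rintro ⟨h1, h2⟩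
    have hsub : X ⊆ S ∪ T := by
      intro x hx
      obtain ⟨i, hi⟩ := h2 x hx
      rcases hidx : finSumFinEquiv.symm i with y | y
      · have : (prodBlock B C hST).parts i = B.parts y := by
          simp [prodBlock, hidx]
        exact Finset.mem_union_left _ (hBS y (this ▸ hi))
      · have : (prodBlock B C hST).parts i = C.parts y := by
          simp [prodBlock, hidx]
        exact Finset.mem_union_right _ (hCT y (this ▸ hi))
    refine ⟨hsub, ⟨?_, ?_⟩, ?_, ?_⟩
    · intro i
      rw [hinterS]
      have := h1 (finSumFinEquiv (Sum.inl i))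
      rwa [prodBlock_parts_inl] at this
    · intro x hx
      rw [Finset.mem_inter] at hx
      obtain ⟨i, hi⟩ := h2 x hx.1
      rcases hidx : finSumFinEquiv.symm i with y | y
      · have : (prodBlock B C hST).parts i = B.parts y := by simp [prodBlock, hidx]
        exact ⟨y, this ▸ hi⟩
      · have : (prodBlock B C hST).parts i = C.parts y := by simp [prodBlock, hidx]
        exact absurd hx.2 (Finset.disjoint_left.1 hST.symm (hCT y (this ▸ hi)))
    · intro j
      rw [hinterT]
      have := h1 (finSumFinEquiv (Sum.inr j))
      rwa [prodBlock_parts_inr] at this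
    · intro x hx
      rw [Finset.mem_inter] at hx
      obtain ⟨i, hi⟩ := h2 x hx.1
      rcases hidx : finSumFinEquiv.symm i with y | y
      · have : (prodBlock B C hST).parts i = B.parts y := by simp [prodBlock, hidx]
        exact absurd hx.2 (Finset.disjoint_left.1 hST (hBS y (this ▸ hi)))
      · have : (prodBlock B C hST).parts i = C.parts y := by simp [prodBlock, hidx]
        exact ⟨y, this ▸ hi⟩
  · rintro ⟨hsub, ⟨hB1, hB2⟩, hC1, hC2⟩
    constructor
    · intro i
      rcases hidx : finSumFinEquiv.symm i with y | y
      · have hp : (prodBlock B C hST).parts i = B.parts y := by simp [prodBlock, hidx]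
        rw [hp, ← hinterS]
        exact hB1 y
      · have hp : (prodBlock B C hST).parts i = C.parts y := by simp [prodBlock, hidx]
        rw [hp, ← hinterT]
        exact hC1 y
    · intro x hx
      rcases Finset.mem_union.1 (hsub hx) with hxS | hxT
      · obtain ⟨i, hi⟩ := hB2 x (Finset.mem_inter.2 ⟨hx, hxS⟩)
        exact ⟨finSumFinEquiv (Sum.inl i), by rw [prodBlock_parts_inl]; exact hi⟩
      · obtain ⟨j, hj⟩ := hC2 x (Finset.mem_inter.2 ⟨hx, hxT⟩)
        exact ⟨finSumFinEquiv (Sum.inr j), by rw [prodBlock_parts_inr]; exact hj⟩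

lemma ExactCover.prod (hST : Disjoint S T) {k₁ k₂ : ℕ} {F G : Set (Finset ℕ)}
    (h₁ : ExactCover S a k₁ F) (h₂ : ExactCover T b k₂ G) :
    ExactCover (S ∪ T) (a + b) (k₁ * k₂)
      {X | X ⊆ S ∪ T ∧ X ∩ S ∈ F ∧ X ∩ T ∈ G} := by
  obtain ⟨B, hBdisj, hBU⟩ := h₁
  obtain ⟨C, hCdisj, hCU⟩ := h₂
  refine ⟨fun i => prodBlock (B (finProdFinEquiv.symm i).1)
    (C (finProdFinEquiv.symm i).2) hST, ?_, ?_⟩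
  · intro i j hij
    rw [Set.disjoint_left]
    intro X hXi hXj
    rw [prodBlock_edges] at hXi hXj
    have hne : finProdFinEquiv.symm i ≠ finProdFinEquiv.symm j :=
      fun h => hij (finProdFinEquiv.symm.injective h)
    rcases eq_or_ne (finProdFinEquiv.symm i).1 (finProdFinEquiv.symm j).1 with h1 | h1
    · have h2 : (finProdFinEquiv.symm i).2 ≠ (finProdFinEquiv.symm j).2 :=
        fun h => hne (Prod.ext h1 h)
      exact Set.disjoint_left.1 (hCdisj _ _ h2) hXi.2.2 hXj.2.2
    · exact Set.disjoint_left.1 (hBdisj _ _ h1) hXi.2.1 hXj.2.1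
  · ext X
    simp only [Set.mem_iUnion, prodBlock_edges, Set.mem_setOf_eq]
    constructor
    · rintro ⟨i, hsub, hB, hC⟩
      exact ⟨hsub, hBU ▸ Set.mem_iUnion.2 ⟨_, hB⟩, hCU ▸ Set.mem_iUnion.2 ⟨_, hC⟩⟩
    · rintro ⟨hsub, hF, hG⟩
      rw [← hBU, Set.mem_iUnion] at hF
      rw [← hCU, Set.mem_iUnion] at hG
      obtain ⟨i, hi⟩ := hF
      obtain ⟨j, hj⟩ := hG
      refine ⟨finProdFinEquiv (i, j), hsub, ?_, ?_⟩ <;> simp [hi, hj]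

end Prod

lemma exists_enum (S : Finset ℕ) :
    ∃ g : ℕ → ℕ, Set.InjOn g (Finset.range S.card) ∧
      (Finset.range S.card).image g = S := by
  classical
  refine ⟨fun m => if h : m < S.card then S.orderEmbOfFin rfl ⟨m, h⟩ else 0, ?_, ?_⟩
  · intro m₁ hm₁ m₂ hm₂ heq
    rw [Finset.coe_range, Set.mem_Iio] at hm₁ hm₂
    simp only [] at heq
    rw [dif_pos hm₁, dif_pos hm₂] at heq
    have := (S.orderEmbOfFin rfl).injective heq
    exact congrArg Fin.val this
  · ext y
    simp only [Finset.mem_image, Finset.mem_range]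
    constructor
    · rintro ⟨m, hm, rfl⟩
      rw [dif_pos hm]
      exact S.orderEmbOfFin_mem rfl _
    · intro hy
      have : y ∈ Set.range ⇑(S.orderEmbOfFin rfl) := by
        rw [Finset.range_orderEmbOfFin]; exact hy
      obtain ⟨i, hi⟩ := this
      exact ⟨i.1, i.2, by rw [dif_pos i.2]; exact hi⟩

lemma image_family {n r : ℕ} {S : Finset ℕ} (g : ℕ → ℕ)
    (hg : Set.InjOn g (Finset.range n)) (him : (Finset.range n).image g = S) :
    Finset.image g '' {X | X ⊆ Finset.range n ∧ X.card = r}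
      = {X | X ⊆ S ∧ X.card = r} := by
  classical
  ext Y
  simp only [Set.mem_image, Set.mem_setOf_eq]
  constructor
  · rintro ⟨X, ⟨hXsub, hXcard⟩, rfl⟩
    refine ⟨him ▸ Finset.image_subset_image hXsub, ?_⟩
    rw [Finset.card_image_of_injOn (hg.mono (Finset.coe_subset.2 hXsub)), hXcard]
  · rintro ⟨hYsub, hYcard⟩
    set X : Finset ℕ := (Finset.range n).filter (fun x => g x ∈ Y) with hXdef
    have hXsub : X ⊆ Finset.range n := Finset.filter_subset _ _
    have him' : X.image g = Y := by
      apply Finset.Subset.antisymm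
      · intro y hy
        obtain ⟨u, hu, rfl⟩ := Finset.mem_image.1 hy
        exact (Finset.mem_filter.1 hu).2
      · intro y hy
        have : y ∈ (Finset.range n).image g := him ▸ hYsub hy
        obtain ⟨u, hu, rfl⟩ := Finset.mem_image.1 this
        exact Finset.mem_image_of_mem g (Finset.mem_filter.2 ⟨hu, hy⟩)
    refine ⟨X, ⟨hXsub, ?_⟩, him'⟩
    rw [← Finset.card_image_of_injOn (hg.mono (Finset.coe_subset.2 hXsub)), him', hYcard]

theorem cover_product_family (S T : Finset ℕ) (hST : Disjoint S T) (a b : ℕ)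
    (ha : 1 ≤ a) (hb : 1 ≤ b) (haS : a ≤ S.card) (hbT : b ≤ T.card) :
    ∃ k ≤ f a S.card * f b T.card,
      ExactCover (S ∪ T) (a + b) k
        {X | X ⊆ S ∪ T ∧ (X ∩ S).card = a ∧ (X ∩ T).card = b} := by
  classical
  obtain ⟨gS, hgS, hgSim⟩ := exists_enum S
  obtain ⟨gT, hgT, hgTim⟩ := exists_enum T
  have cS := (f_spec a S.card).map gS hgS hgSim
  have cT := (f_spec b T.card).map gT hgT hgTim
  rw [image_family gS hgS hgSim] at cS
  rw [image_family gT hgT hgTim] at cT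
  refine ⟨f a S.card * f b T.card, le_refl _, ?_⟩
  have hprod := cS.prod hST cT
  convert hprod using 1
  ext X
  simp only [Set.mem_setOf_eq]
  constructor
  · rintro ⟨hsub, h1, h2⟩
    exact ⟨hsub, ⟨Finset.inter_subset_right, h1⟩, Finset.inter_subset_right, h2⟩
  · rintro ⟨hsub, ⟨_, h1⟩, _, h2⟩
    exact ⟨hsub, h1, h2⟩
end

section
/- Let S and T be disjoint finite sets and let a and b be even nonnegative integers with a + 1 ≤ |S| and b + 1 ≤ |T|. Then the family ((S choose a) × (T choose b+1)) ∪ ((S choose a+1) × (T choose b)) can be exactly covered using at most C(|S|, a/2) · C(|T|, b/2) complete (a+b+1)-partite (a+b+1)-graphs on S ∪ T, where C(n, k) denotes the binomial coefficient. -/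
open Finset

/-- rank of `x` in `A`: number of elements of `A` that are `≤ x`. -/
def rnk (A : Finset ℕ) (x : ℕ) : ℕ := (A.filter (fun y => y ≤ x)).card

lemma one_le_rnk {A : Finset ℕ} {x : ℕ} (hx : x ∈ A) : 1 ≤ rnk A x := by
  have h : x ∈ A.filter (fun y => y ≤ x) := mem_filter.2 ⟨hx, le_rfl⟩
  exact card_pos.2 ⟨x, h⟩

lemma rnk_le_card {A : Finset ℕ} {x : ℕ} : rnk A x ≤ A.card := card_filter_le _ _

lemma rnk_mono {A : Finset ℕ} {x y : ℕ} (h : x ≤ y) : rnk A x ≤ rnk A y := by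
  apply card_le_card
  intro z hz
  simp only [mem_filter] at *
  exact ⟨hz.1, hz.2.trans h⟩

lemma rnk_lt_rnk {A : Finset ℕ} {x y : ℕ} (hy : y ∈ A) (hxy : x < y) : rnk A x < rnk A y := by
  apply card_lt_card
  constructor
  · intro z hz
    simp only [mem_filter] at *
    exact ⟨hz.1, hz.2.trans hxy.le⟩
  · intro hsub
    have := hsub (mem_filter.2 ⟨hy, le_rfl⟩)
    simp only [mem_filter] at this
    omega

lemma rnk_injOn {A : Finset ℕ} {x y : ℕ} (hx : x ∈ A) (hy : y ∈ A)
    (h : rnk A x = rnk A y) : x = y := by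
  rcases lt_trichotomy x y with h1 | h1 | h1
  · have := rnk_lt_rnk hy h1; omega
  · exact h1
  · have := rnk_lt_rnk hx h1; omega

lemma lt_iff_rnk_lt {A : Finset ℕ} {x y : ℕ} (hx : x ∈ A) (hy : y ∈ A) :
    x < y ↔ rnk A x < rnk A y := by
  constructor
  · exact rnk_lt_rnk hy
  · intro h
    rcases lt_trichotomy x y with h1 | h1 | h1
    · exact h1
    · subst h1; omega
    · have := rnk_lt_rnk hx h1; omega
  
lemma rnk_image (A : Finset ℕ) : A.image (rnk A) = Finset.Icc 1 A.card := by
  apply eq_of_subset_of_card_le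
  · intro v hv
    simp only [mem_image] at hv
    obtain ⟨x, hx, rfl⟩ := hv
    exact mem_Icc.2 ⟨one_le_rnk hx, rnk_le_card⟩
  · rw [Nat.card_Icc]
    have : (A.image (rnk A)).card = A.card := by
      apply card_image_of_injOn
      intro x hx y hy h
      exact rnk_injOn hx hy h
    omega

lemma rnk_surj {A : Finset ℕ} {m : ℕ} (h1 : 1 ≤ m) (h2 : m ≤ A.card) :
    ∃ x ∈ A, rnk A x = m := by
  have : m ∈ A.image (rnk A) := by rw [rnk_image]; exact mem_Icc.2 ⟨h1, h2⟩
  simpa using this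

/-- the elements of `A` of even rank. -/
def evenPart (A : Finset ℕ) : Finset ℕ := A.filter (fun x => Even (rnk A x))

/-- `A` matches `P` : every element of `P` is in `A` and has rank in `A` twice its rank in `P`. -/
def Match (A P : Finset ℕ) : Prop := ∀ p ∈ P, p ∈ A ∧ rnk A p = 2 * rnk P p

lemma card_Icc_filter_even (n : ℕ) : ((Finset.Icc 1 n).filter (fun v => Even v)).card = n / 2 := by
  induction n with
  | zero => decide
  | succ n ih =>
    have h1 : Finset.Icc 1 (n+1) = insert (n+1) (Finset.Icc 1 n) := by
      ext z; simp [mem_Icc, mem_insert]; omega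
    rw [h1, filter_insert]
    by_cases h : Even (n+1)
    · rw [if_pos h, card_insert_of_notMem (by simp [mem_filter])]
      rw [ih]
      rw [Nat.even_iff] at h
      omega
    · rw [if_neg h, ih]
      rw [Nat.even_iff] at h
      omega

lemma filter_le_image (A : Finset ℕ) {p : ℕ} (hp : p ∈ A) :
    (A.filter (fun y => y ≤ p)).image (rnk A) = Finset.Icc 1 (rnk A p) := by
  apply eq_of_subset_of_card_le
  · intro v hv
    simp only [mem_image, mem_filter] at hv
    obtain ⟨x, ⟨hx, hxp⟩, rfl⟩ := hv
    exact mem_Icc.2 ⟨one_le_rnk hx, rnk_mono hxp⟩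
  · rw [Nat.card_Icc]
    have hcard : ((A.filter (fun y => y ≤ p)).image (rnk A)).card
        = (A.filter (fun y => y ≤ p)).card := by
      apply card_image_of_injOn
      intro x hx y hy h
      exact rnk_injOn (mem_filter.1 hx).1 (mem_filter.1 hy).1 h
    rw [hcard]
    show rnk A p + 1 - 1 ≤ _
    unfold rnk
    omega

lemma rnk_evenPart {A : Finset ℕ} {p : ℕ} (hp : p ∈ A) (he : Even (rnk A p)) :
    2 * rnk (evenPart A) p = rnk A p := by
  have key : (evenPart A).filter (fun y => y ≤ p)
      = (A.filter (fun y => y ≤ p)).filter (fun x => Even (rnk A x)) := by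
    ext z; simp only [evenPart, mem_filter]; tauto
  have himg : ((A.filter (fun y => y ≤ p)).filter (fun x => Even (rnk A x))).image (rnk A)
      = (Finset.Icc 1 (rnk A p)).filter (fun v => Even v) := by
    rw [← filter_le_image A hp, Finset.filter_image]
  have hinj : ((A.filter (fun y => y ≤ p)).filter (fun x => Even (rnk A x))).card
      = ((Finset.Icc 1 (rnk A p)).filter (fun v => Even v)).card := by
    rw [himg.symm]
    symm
    apply card_image_of_injOn
    intro x hx y hy h
    have hx' := Finset.mem_filter.1 (Finset.mem_coe.1 hx)
    have hy' := Finset.mem_filter.1 (Finset.mem_coe.1 hy)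
    exact rnk_injOn (Finset.mem_filter.1 hx'.1).1 (Finset.mem_filter.1 hy'.1).1 h
  have := card_Icc_filter_even (rnk A p)
  obtain ⟨m, hm⟩ := he
  unfold rnk at *
  rw [key, hinj, this]
  omega

lemma match_evenPart (A : Finset ℕ) : Match A (evenPart A) := by
  intro p hp
  have hp' := mem_filter.1 hp
  exact ⟨hp'.1, (rnk_evenPart hp'.1 hp'.2).symm⟩

lemma card_evenPart (A : Finset ℕ) : (evenPart A).card = A.card / 2 := by
  have himg : (evenPart A).image (rnk A) = (Finset.Icc 1 A.card).filter (fun v => Even v) := by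
    unfold evenPart
    rw [← rnk_image, Finset.filter_image]
  have hinj : (evenPart A).card = ((evenPart A).image (rnk A)).card := by
    symm
    apply card_image_of_injOn
    intro x hx y hy h
    exact rnk_injOn (Finset.mem_filter.1 (Finset.mem_coe.1 hx)).1 (Finset.mem_filter.1 (Finset.mem_coe.1 hy)).1 h
  rw [hinj, himg, card_Icc_filter_even]

lemma match_unique {A P : Finset ℕ} (h : Match A P) (hk : A.card ≤ 2 * P.card + 1) :
    P = evenPart A := by
  apply Subset.antisymm
  · intro p hp
    obtain ⟨hpA, hr⟩ := h p hp
    exact mem_filter.2 ⟨hpA, ⟨rnk P p, by omega⟩⟩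
  · intro x hx
    obtain ⟨hxA, hev⟩ := mem_filter.1 hx
    obtain ⟨m, hm⟩ := hev
    have h1 : 1 ≤ rnk A x := one_le_rnk hxA
    have h2 : rnk A x ≤ A.card := rnk_le_card
    have hm1 : 1 ≤ m := by omega
    have hm2 : m ≤ P.card := by omega
    obtain ⟨p, hpP, hpm⟩ := rnk_surj hm1 hm2
    obtain ⟨hpA, hr⟩ := h p hpP
    have : p = x := rnk_injOn hpA hxA (by omega)
    rwa [← this]

/-- the gap of `p` : elements of `Z` strictly between the predecessor of `p` in `P` and `p`. -/
def gap (Z P : Finset ℕ) (p : ℕ) : Finset ℕ :=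
  Z.filter (fun s => s < p ∧ ∀ q ∈ P, q < p → q < s)

/-- elements of `Z` above all of `P`. -/
def above (Z P : Finset ℕ) : Finset ℕ := Z.filter (fun s => ∀ q ∈ P, q < s)

lemma gap_subset {Z P : Finset ℕ} {p : ℕ} : gap Z P p ⊆ Z := filter_subset _ _
lemma above_subset {Z P : Finset ℕ} : above Z P ⊆ Z := filter_subset _ _

lemma not_mem_gap_self {Z P : Finset ℕ} {p : ℕ} (hp : p ∈ P) {s : ℕ} (hs : s ∈ gap Z P p) :
    s ∉ P := by
  intro hsP
  obtain ⟨_, h1, h2⟩ := mem_filter.1 hs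
  exact lt_irrefl s (h2 s hsP h1)

lemma gap_disj {Z P : Finset ℕ} {p p' : ℕ} (hp : p ∈ P) (hp' : p' ∈ P) (hne : p ≠ p') :
    Disjoint (gap Z P p) (gap Z P p') := by
  rcases lt_or_gt_of_ne hne with h | h
  · rw [disjoint_left]
    intro s hs hs'
    obtain ⟨_, h1, _⟩ := mem_filter.1 hs
    obtain ⟨_, _, h2⟩ := mem_filter.1 hs'
    exact absurd (h2 p hp h) (by omega)
  · rw [disjoint_left]
    intro s hs hs'
    obtain ⟨_, _, h2⟩ := mem_filter.1 hs
    obtain ⟨_, h1, _⟩ := mem_filter.1 hs'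
    exact absurd (h2 p' hp' h) (by omega)

lemma gap_disj_singleton {Z P : Finset ℕ} {p p' : ℕ} (hp : p ∈ P) (hp' : p' ∈ P) :
    Disjoint (gap Z P p) ({p'} : Finset ℕ) := by
  rw [disjoint_right]
  intro s hs hsg
  rw [mem_singleton] at hs
  subst hs
  exact not_mem_gap_self hp hsg hp'

lemma gap_disj_above {Z P : Finset ℕ} {p : ℕ} (hp : p ∈ P) :
    Disjoint (gap Z P p) (above Z P) := by
  rw [disjoint_left]
  intro s hs hs'
  obtain ⟨_, h1, _⟩ := mem_filter.1 hs
  obtain ⟨_, h2⟩ := mem_filter.1 hs'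
  exact absurd (h2 p hp) (by omega)

lemma singleton_disj_above {Z P : Finset ℕ} {p : ℕ} (hp : p ∈ P) :
    Disjoint ({p} : Finset ℕ) (above Z P) := by
  rw [disjoint_left]
  intro s hs hs'
  rw [mem_singleton] at hs
  obtain ⟨_, h2⟩ := mem_filter.1 hs'
  have := h2 p hp
  omega

/-- coverage: every element of `Z` is in `P`, in a gap, or above. -/
lemma cover_cases {Z P : Finset ℕ} {z : ℕ} (hz : z ∈ Z) :
    z ∈ P ∨ (∃ p ∈ P, z ∈ gap Z P p) ∨ z ∈ above Z P := by
  by_cases hzP : z ∈ P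
  · exact Or.inl hzP
  by_cases hab : ∀ q ∈ P, q < z
  · exact Or.inr (Or.inr (mem_filter.2 ⟨hz, hab⟩))
  right; left
  push_neg at hab
  have hne : (P.filter (fun q => z ≤ q)).Nonempty := by
    obtain ⟨q, hq, hqz⟩ := hab
    exact ⟨q, mem_filter.2 ⟨hq, by omega⟩⟩
  set p0 := (P.filter (fun q => z ≤ q)).min' hne with hp0
  have hp0mem := (P.filter (fun q => z ≤ q)).min'_mem hne
  obtain ⟨hp0P, hp0z⟩ := mem_filter.1 hp0mem
  refine ⟨p0, hp0P, mem_filter.2 ⟨hz, ?_, ?_⟩⟩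
  · rcases lt_or_eq_of_le hp0z with h | h
    · exact h
    · exact absurd (h ▸ hp0P) hzP
  · intro q hq hqp0
    by_contra hqz
    push_neg at hqz
    have : p0 ≤ q := min'_le _ _ (mem_filter.2 ⟨hq, hqz⟩)
    omega

/-! ### Backward direction: `Match` implies the counting conditions. -/

lemma match_gap_card {Z P A : Finset ℕ} (hA : A ⊆ Z) (hM : Match A P) {p : ℕ} (hp : p ∈ P) :
    (A ∩ gap Z P p).card = 1 := by
  obtain ⟨hpA, hr⟩ := hM p hp
  have hm1 : 1 ≤ rnk P p := one_le_rnk hp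
  set m := rnk P p with hm
  by_cases hm2 : m = 1
  · -- no element of P below p
    have hnob : ∀ q ∈ P, ¬ q < p := by
      intro q hq hqp
      have := rnk_lt_rnk hp hqp
      have := one_le_rnk hq
      omega
    have hset : A ∩ gap Z P p = (A.filter (fun y => y ≤ p)).erase p := by
      ext s
      simp only [mem_inter, gap, mem_filter, mem_erase]
      constructor
      · rintro ⟨hsA, _, hsp, _⟩
        exact ⟨by omega, hsA, by omega⟩
      · rintro ⟨hne, hsA, hsp⟩
        exact ⟨hsA, hA hsA, by omega, fun q hq hqp => absurd hqp (hnob q hq)⟩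
    rw [hset, card_erase_of_mem (a := p) (s := A.filter (fun y => y ≤ p)) (mem_filter.2 ⟨hpA, le_rfl⟩)]
    have : (A.filter (fun y => y ≤ p)).card = rnk A p := rfl
    omega
  · -- predecessor p'' exists
    obtain ⟨p'', hp''P, hp''r⟩ := rnk_surj (A := P) (m := m - 1) (by omega)
      (by have : m ≤ P.card := rnk_le_card; omega)
    obtain ⟨hp''A, hr''⟩ := hM p'' hp''P
    have hlt : p'' < p := by
      rw [lt_iff_rnk_lt hp''P hp]
      omega
    have hset : A ∩ gap Z P p
        = ((A.filter (fun y => y ≤ p)) \ (A.filter (fun y => y ≤ p''))).erase p := by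
      ext s
      simp only [mem_inter, gap, mem_filter, mem_erase, mem_sdiff, not_and]
      constructor
      · rintro ⟨hsA, _, hsp, hall⟩
        have := hall p'' hp''P hlt
        exact ⟨by omega, ⟨⟨hsA, by omega⟩, fun _ => by omega⟩⟩
      · rintro ⟨hne, ⟨hsA, hsp⟩, hns⟩
        have hs'' : ¬ s ≤ p'' := fun h => hns hsA h
        refine ⟨hsA, hA hsA, by omega, ?_⟩
        intro q hq hqp
        have : rnk P q < m := rnk_lt_rnk hp hqp
        have hqle : q ≤ p'' := by
          by_contra hqgt
          push_neg at hqgt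
          have := rnk_lt_rnk hq hqgt
          omega
        omega
    have hsub : (A.filter (fun y => y ≤ p'')) ⊆ (A.filter (fun y => y ≤ p)) := by
      intro s hs
      obtain ⟨h1, h2⟩ := mem_filter.1 hs
      exact mem_filter.2 ⟨h1, by omega⟩
    have hpmem : p ∈ (A.filter (fun y => y ≤ p)) \ (A.filter (fun y => y ≤ p'')) := by
      rw [mem_sdiff]
      exact ⟨mem_filter.2 ⟨hpA, le_rfl⟩, fun h => by have := (mem_filter.1 h).2; omega⟩
    rw [hset, card_erase_of_mem hpmem, card_sdiff_of_subset hsub]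
    have e1 : (A.filter (fun y => y ≤ p)).card = rnk A p := rfl
    have e2 : (A.filter (fun y => y ≤ p'')).card = rnk A p'' := rfl
    omega

lemma match_above_card {Z P A : Finset ℕ} (hA : A ⊆ Z) (hM : Match A P) :
    (A ∩ above Z P).card + 2 * P.card = A.card := by
  rcases P.eq_empty_or_nonempty with rfl | hne
  · have : A ∩ above Z ∅ = A := by
      ext s
      simp only [mem_inter, above, mem_filter, notMem_empty]
      exact ⟨fun h => h.1, fun h => ⟨h, hA h, fun q hq => absurd hq (by simp)⟩⟩
    rw [this]
    simp
  · have hk1 : 1 ≤ P.card := card_pos.2 hne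
    obtain ⟨pm, hpmP, hpmr⟩ := rnk_surj (m := P.card) (by omega) le_rfl
    obtain ⟨hpmA, hrm⟩ := hM pm hpmP
    have hmax : ∀ q ∈ P, q ≤ pm := by
      intro q hq
      by_contra hgt
      push_neg at hgt
      have := rnk_lt_rnk hq hgt
      have : rnk P q ≤ P.card := rnk_le_card
      omega
    have hset : A ∩ above Z P = A \ A.filter (fun y => y ≤ pm) := by
      ext s
      simp only [mem_inter, above, mem_filter, mem_sdiff, not_and]
      constructor
      · rintro ⟨hsA, _, hall⟩
        have := hall pm hpmP
        exact ⟨hsA, fun _ => by omega⟩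
      · rintro ⟨hsA, hs⟩
        have hs' : ¬ s ≤ pm := fun h => hs hsA h
        refine ⟨hsA, hA hsA, fun q hq => ?_⟩
        have := hmax q hq
        omega
    have e1 : (A.filter (fun y => y ≤ pm)).card = rnk A pm := rfl
    have hle : rnk A pm ≤ A.card := rnk_le_card
    rw [hset, card_sdiff_of_subset (filter_subset _ _)]
    omega

/-! ### Forward direction: the counting conditions imply `Match`. -/

lemma fit_rnk {Z P A : Finset ℕ} (hP : P ⊆ Z) (hA : A ⊆ Z)
    (hfit : ∀ p ∈ P, p ∈ A ∧ (A ∩ gap Z P p).card = 1) {p : ℕ} (hp : p ∈ P) :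
    rnk A p = 2 * rnk P p := by
  classical
  set Pp := P.filter (fun y => y ≤ p) with hPp
  have hdecomp : A.filter (fun y => y ≤ p) = Pp ∪ Pp.biUnion (fun p' => A ∩ gap Z P p') := by
    ext s
    simp only [mem_union, mem_biUnion, mem_filter, mem_inter, hPp]
    constructor
    · rintro ⟨hsA, hsp⟩
      rcases cover_cases (P := P) (hA hsA) with hsP | ⟨p', hp'P, hsg⟩ | hsab
      · exact Or.inl ⟨hsP, hsp⟩
      · have hp'le : p' ≤ p := by
          by_contra hgt
          push_neg at hgt
          have := (mem_filter.1 hsg).2.2 p hp hgt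
          omega
        exact Or.inr ⟨p', ⟨hp'P, hp'le⟩, hsA, hsg⟩
      · have := (mem_filter.1 hsab).2 p hp
        omega
    · rintro (⟨hsP, hsp⟩ | ⟨p', ⟨hp'P, hp'le⟩, hsA, hsg⟩)
      · exact ⟨(hfit s hsP).1, hsp⟩
      · have := (mem_filter.1 hsg).2.1
        exact ⟨hsA, by omega⟩
  have hdisj : Disjoint Pp (Pp.biUnion (fun p' => A ∩ gap Z P p')) := by
    rw [disjoint_left]
    intro s hs hs'
    obtain ⟨p', hp', hsg⟩ := mem_biUnion.1 hs'
    exact not_mem_gap_self (mem_of_mem_filter p' hp') (mem_inter.1 hsg).2 (mem_of_mem_filter s hs)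
  have hbi : (Pp.biUnion (fun p' => A ∩ gap Z P p')).card = Pp.card := by
    rw [card_biUnion]
    · rw [Finset.sum_congr rfl (fun p' hp' => (hfit p' (mem_of_mem_filter p' hp')).2)]
      simp [hPp]
    · intro x hx y hy hxy
      exact Disjoint.mono inter_subset_right inter_subset_right
        (gap_disj (mem_of_mem_filter x hx) (mem_of_mem_filter y hy) hxy)
  have hr : rnk A p = (A.filter (fun y => y ≤ p)).card := rfl
  have hrP : rnk P p = Pp.card := rfl
  rw [hr, hdecomp, card_union_of_disjoint hdisj, hbi, hrP]
  omega

lemma fit_match {Z P A : Finset ℕ} (hP : P ⊆ Z) (hA : A ⊆ Z)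
    (hfit : ∀ p ∈ P, p ∈ A ∧ (A ∩ gap Z P p).card = 1) : Match A P :=
  fun p hp => ⟨(hfit p hp).1, fit_rnk hP hA hfit hp⟩

lemma fit_card {Z P A : Finset ℕ} (hP : P ⊆ Z) (hA : A ⊆ Z)
    (hfit : ∀ p ∈ P, p ∈ A ∧ (A ∩ gap Z P p).card = 1) :
    A.card = 2 * P.card + (A ∩ above Z P).card :=
  (match_above_card hA (fit_match hP hA hfit)).symm ▸ by
    have := match_above_card hA (fit_match hP hA hfit)
    omega

/-- an arbitrary enumeration of a finset. -/
noncomputable def enum (P : Finset ℕ) (i : ℕ) : ℕ :=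
  if h : i < P.card then ((P.equivFin.symm ⟨i, h⟩ : P) : ℕ) else 0

lemma enum_mem {P : Finset ℕ} {i : ℕ} (h : i < P.card) : enum P i ∈ P := by
  rw [enum, dif_pos h]
  exact (P.equivFin.symm ⟨i, h⟩).2

lemma enum_inj {P : Finset ℕ} {i j : ℕ} (hi : i < P.card) (hj : j < P.card)
    (h : enum P i = enum P j) : i = j := by
  simp only [enum] at h
  rw [dif_pos hi, dif_pos hj] at h
  have := P.equivFin.symm.injective (Subtype.ext h)
  exact congrArg Fin.val this

lemma enum_surj {P : Finset ℕ} {p : ℕ} (hp : p ∈ P) : ∃ i < P.card, enum P i = p := by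
  refine ⟨(P.equivFin ⟨p, hp⟩ : ℕ), (P.equivFin ⟨p, hp⟩).2, ?_⟩
  rw [enum, dif_pos (P.equivFin ⟨p, hp⟩).2]
  have : (⟨(P.equivFin ⟨p, hp⟩ : ℕ), (P.equivFin ⟨p, hp⟩).2⟩ : Fin P.card) = P.equivFin ⟨p, hp⟩ :=
    Fin.ext rfl
  rw [this, Equiv.symm_apply_apply]

/-- a part on one side : alternately a gap or a singleton. -/
noncomputable def sidePart (Z P : Finset ℕ) (m : ℕ) : Finset ℕ :=
  if m % 2 = 0 then gap Z P (enum P (m / 2)) else {enum P (m / 2)}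

/-- the parts of the block determined by `P ⊆ S` and `Q ⊆ T`. -/
noncomputable def partNat (S T P Q : Finset ℕ) (n : ℕ) : Finset ℕ :=
  if n < 2 * P.card then sidePart S P n
  else if n < 2 * P.card + 2 * Q.card then sidePart T Q (n - 2 * P.card)
  else above S P ∪ above T Q

/-- a part on the `Z` side is contained in `Z`. -/
lemma sidePart_sub {Z P : Finset ℕ} (hP : P ⊆ Z) {m : ℕ} (hm : m < 2 * P.card) :
    sidePart Z P m ⊆ Z := by
  rw [sidePart]
  split_ifs
  · exact gap_subset
  · exact singleton_subset_iff.2 (hP (enum_mem (by omega)))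

lemma partNat_subset {S T P Q : Finset ℕ} (hP : P ⊆ S) (hQ : Q ⊆ T) (n : ℕ) :
    partNat S T P Q n ⊆ S ∪ T := by
  rw [partNat]
  split_ifs with h1 h2
  · exact (sidePart_sub hP h1).trans subset_union_left
  · exact (sidePart_sub hQ (by omega)).trans subset_union_right
  · exact union_subset (above_subset.trans subset_union_left)
      (above_subset.trans subset_union_right)

/-- parts on one side are pairwise disjoint. -/
lemma sidePart_disj {Z P : Finset ℕ} {m n : ℕ} (hm : m < 2 * P.card) (hn : n < 2 * P.card)
    (hmn : m ≠ n) : Disjoint (sidePart Z P m) (sidePart Z P n) := by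
  have hm2 : m / 2 < P.card := by omega
  have hn2 : n / 2 < P.card := by omega
  have hmm := enum_mem hm2
  have hnm := enum_mem hn2
  rw [sidePart, sidePart]
  split_ifs with h1 h2 h3
  · refine gap_disj hmm hnm (fun he => hmn ?_)
    have := enum_inj hm2 hn2 he
    omega
  · exact gap_disj_singleton hmm hnm
  · exact (gap_disj_singleton hnm hmm).symm
  · rw [disjoint_singleton_left, mem_singleton]
    intro he
    have := enum_inj hm2 hn2 he
    omega

/-- a part on the `Z` side is disjoint from `above Z P`. -/
lemma sidePart_disj_above {Z P : Finset ℕ} {m : ℕ} (hm : m < 2 * P.card) :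
    Disjoint (sidePart Z P m) (above Z P) := by
  rw [sidePart]
  split_ifs
  · exact gap_disj_above (enum_mem (by omega))
  · exact singleton_disj_above (enum_mem (by omega))

set_option maxHeartbeats 1000000 in
lemma partNat_disj {S T P Q : Finset ℕ} (hP : P ⊆ S) (hQ : Q ⊆ T) (hST : Disjoint S T)
    {m n : ℕ} (hm : m < 2 * P.card + 2 * Q.card + 1) (hn : n < 2 * P.card + 2 * Q.card + 1)
    (hmn : m ≠ n) : Disjoint (partNat S T P Q m) (partNat S T P Q n) := by
  rw [partNat, partNat]
  split_ifs
  all_goals first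
    | exact sidePart_disj (by omega) (by omega) (by omega)
    | exact Disjoint.mono (sidePart_sub hP (by omega)) (sidePart_sub hQ (by omega)) hST
    | exact Disjoint.mono (sidePart_sub hQ (by omega)) (sidePart_sub hP (by omega)) hST.symm
    | exact disjoint_union_right.2 ⟨sidePart_disj_above (by omega),
        Disjoint.mono (sidePart_sub hP (by omega)) above_subset hST⟩
    | exact disjoint_union_right.2 ⟨Disjoint.mono (sidePart_sub hQ (by omega))
        above_subset hST.symm, sidePart_disj_above (by omega)⟩
    | exact Disjoint.symm (disjoint_union_right.2 ⟨sidePart_disj_above (by omega),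
        Disjoint.mono (sidePart_sub hP (by omega)) above_subset hST⟩)
    | exact Disjoint.symm (disjoint_union_right.2 ⟨Disjoint.mono (sidePart_sub hQ (by omega))
        above_subset hST.symm, sidePart_disj_above (by omega)⟩)
    | omega

lemma inter_restrict {X g S : Finset ℕ} (h : g ⊆ S) : X ∩ g = (X ∩ S) ∩ g := by
  ext x
  simp only [mem_inter]
  exact ⟨fun ⟨h1, h2⟩ => ⟨⟨h1, h h2⟩, h2⟩, fun ⟨⟨h1, _⟩, h2⟩ => ⟨h1, h2⟩⟩

lemma card_inter_singleton {X : Finset ℕ} {p : ℕ} : (X ∩ {p}).card = 1 ↔ p ∈ X := by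
  by_cases h : p ∈ X
  · rw [inter_comm, Finset.singleton_inter_of_mem h]
    simp [h]
  · rw [inter_comm, Finset.singleton_inter_of_notMem h]
    simp [h]

lemma partNat_eq_gapS {S T P Q : Finset ℕ} {i : ℕ} (hi : i < P.card) :
    partNat S T P Q (2 * i) = gap S P (enum P i) := by
  have h2 : 2 * i / 2 = i := by omega
  rw [partNat, if_pos (by omega), sidePart, if_pos (by omega), h2]

lemma partNat_eq_singS {S T P Q : Finset ℕ} {i : ℕ} (hi : i < P.card) :
    partNat S T P Q (2 * i + 1) = {enum P i} := by
  have h2 : (2 * i + 1) / 2 = i := by omega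
  rw [partNat, if_pos (by omega), sidePart, if_neg (by omega), h2]

lemma partNat_eq_gapT {S T P Q : Finset ℕ} {j : ℕ} (hj : j < Q.card) :
    partNat S T P Q (2 * P.card + 2 * j) = gap T Q (enum Q j) := by
  have h2 : (2 * P.card + 2 * j - 2 * P.card) / 2 = j := by omega
  rw [partNat, if_neg (by omega), if_pos (by omega), sidePart, if_pos (by omega), h2]

lemma partNat_eq_singT {S T P Q : Finset ℕ} {j : ℕ} (hj : j < Q.card) :
    partNat S T P Q (2 * P.card + 2 * j + 1) = {enum Q j} := by
  have h2 : (2 * P.card + 2 * j + 1 - 2 * P.card) / 2 = j := by omega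
  rw [partNat, if_neg (by omega), if_pos (by omega), sidePart, if_neg (by omega), h2]

lemma partNat_eq_tail {S T P Q : Finset ℕ} :
    partNat S T P Q (2 * P.card + 2 * Q.card) = above S P ∪ above T Q := by
  rw [partNat, if_neg (by omega), if_neg (by omega)]

lemma edge_char {S T P Q X : Finset ℕ} (hP : P ⊆ S) (hQ : Q ⊆ T) (hST : Disjoint S T) :
    ((∀ n < 2 * P.card + 2 * Q.card + 1, (X ∩ partNat S T P Q n).card = 1) ∧
     (∀ x ∈ X, ∃ n < 2 * P.card + 2 * Q.card + 1, x ∈ partNat S T P Q n))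
    ↔ (X ⊆ S ∪ T
       ∧ (∀ p ∈ P, p ∈ X ∧ ((X ∩ S) ∩ gap S P p).card = 1)
       ∧ (∀ q ∈ Q, q ∈ X ∧ ((X ∩ T) ∩ gap T Q q).card = 1)
       ∧ ((X ∩ S) ∩ above S P).card + ((X ∩ T) ∩ above T Q).card = 1) := by
  have htail_split : (X ∩ (above S P ∪ above T Q)).card
      = ((X ∩ S) ∩ above S P).card + ((X ∩ T) ∩ above T Q).card := by
    rw [inter_union_distrib_left]
    rw [card_union_of_disjoint (Disjoint.mono (inter_subset_right.trans above_subset)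
      (inter_subset_right.trans above_subset) hST)]
    rw [← inter_restrict (above_subset), ← inter_restrict (above_subset)]
  constructor
  · rintro ⟨h1, h2⟩
    refine ⟨?_, ?_, ?_, ?_⟩
    · intro x hx
      obtain ⟨n, _, hxn⟩ := h2 x hx
      exact partNat_subset hP hQ n hxn
    · intro p hp
      obtain ⟨i, hi, rfl⟩ := enum_surj hp
      constructor
      · have := h1 (2 * i + 1) (by omega)
        rw [partNat_eq_singS hi] at this
        exact card_inter_singleton.1 this
      · have := h1 (2 * i) (by omega)
        rw [partNat_eq_gapS hi, inter_restrict (gap_subset (Z := S) (P := P))] at this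
        exact this
    · intro q hq
      obtain ⟨j, hj, rfl⟩ := enum_surj hq
      constructor
      · have := h1 (2 * P.card + 2 * j + 1) (by omega)
        rw [partNat_eq_singT hj] at this
        exact card_inter_singleton.1 this
      · have := h1 (2 * P.card + 2 * j) (by omega)
        rw [partNat_eq_gapT hj, inter_restrict (gap_subset (Z := T) (P := Q))] at this
        exact this
    · have := h1 (2 * P.card + 2 * Q.card) (by omega)
      rw [partNat_eq_tail, htail_split] at this
      exact this
  · rintro ⟨hXST, hSfit, hTfit, htail⟩
    constructor
    · intro n hn
      by_cases hzS : n < 2 * P.card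
      · by_cases hpar : n % 2 = 0
        · obtain ⟨i, rfl⟩ : ∃ i, n = 2 * i := ⟨n / 2, by omega⟩
          rw [partNat_eq_gapS (by omega), inter_restrict (gap_subset (Z := S) (P := P))]
          exact (hSfit _ (enum_mem (by omega))).2
        · obtain ⟨i, rfl⟩ : ∃ i, n = 2 * i + 1 := ⟨n / 2, by omega⟩
          rw [partNat_eq_singS (by omega), card_inter_singleton]
          exact (hSfit _ (enum_mem (by omega))).1
      · by_cases hzT : n < 2 * P.card + 2 * Q.card
        · by_cases hpar : (n - 2 * P.card) % 2 = 0
          · obtain ⟨j, rfl⟩ : ∃ j, n = 2 * P.card + 2 * j := ⟨(n - 2 * P.card) / 2, by omega⟩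
            rw [partNat_eq_gapT (by omega), inter_restrict (gap_subset (Z := T) (P := Q))]
            exact (hTfit _ (enum_mem (by omega))).2
          · obtain ⟨j, rfl⟩ : ∃ j, n = 2 * P.card + 2 * j + 1 :=
              ⟨(n - 2 * P.card) / 2, by omega⟩
            rw [partNat_eq_singT (by omega), card_inter_singleton]
            exact (hTfit _ (enum_mem (by omega))).1
        · obtain rfl : n = 2 * P.card + 2 * Q.card := by omega
          rw [partNat_eq_tail, htail_split]
          exact htail
    · intro x hx
      rcases mem_union.1 (hXST hx) with hxS | hxT
      · rcases cover_cases (P := P) hxS with hxP | ⟨p, hpP, hxg⟩ | hxab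
        · obtain ⟨i, hi, rfl⟩ := enum_surj hxP
          exact ⟨2 * i + 1, by omega, by rw [partNat_eq_singS hi]; exact mem_singleton_self _⟩
        · obtain ⟨i, hi, rfl⟩ := enum_surj hpP
          exact ⟨2 * i, by omega, by rw [partNat_eq_gapS hi]; exact hxg⟩
        · exact ⟨2 * P.card + 2 * Q.card, by omega,
            by rw [partNat_eq_tail]; exact mem_union_left _ hxab⟩
      · rcases cover_cases (P := Q) hxT with hxQ | ⟨q, hqQ, hxg⟩ | hxab
        · obtain ⟨j, hj, rfl⟩ := enum_surj hxQ
          exact ⟨2 * P.card + 2 * j + 1, by omega,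
            by rw [partNat_eq_singT hj]; exact mem_singleton_self _⟩
        · obtain ⟨j, hj, rfl⟩ := enum_surj hqQ
          exact ⟨2 * P.card + 2 * j, by omega, by rw [partNat_eq_gapT hj]; exact hxg⟩
        · exact ⟨2 * P.card + 2 * Q.card, by omega,
            by rw [partNat_eq_tail]; exact mem_union_right _ hxab⟩

/-- The per-pair edge condition. -/
def EdgeCond (S T P Q X : Finset ℕ) : Prop :=
  X ⊆ S ∪ T
    ∧ (∀ p ∈ P, p ∈ X ∧ ((X ∩ S) ∩ gap S P p).card = 1)
    ∧ (∀ q ∈ Q, q ∈ X ∧ ((X ∩ T) ∩ gap T Q q).card = 1)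
    ∧ ((X ∩ S) ∩ above S P).card + ((X ∩ T) ∩ above T Q).card = 1

open Classical in
/-- The pairs `(P, Q)` indexing the blocks of the cover. -/
noncomputable def goodPairs (S T : Finset ℕ) (kS kT : ℕ) : Finset (Finset ℕ × Finset ℕ) :=
  ((S.powersetCard kS) ×ˢ (T.powersetCard kT)).filter
    (fun PQ => ∀ n < 2 * PQ.1.card + 2 * PQ.2.card + 1, (partNat S T PQ.1 PQ.2 n).Nonempty)

lemma goodPairs_mem {S T : Finset ℕ} {kS kT : ℕ} {PQ : Finset ℕ × Finset ℕ} :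
    PQ ∈ goodPairs S T kS kT ↔
      PQ.1 ⊆ S ∧ PQ.1.card = kS ∧ PQ.2 ⊆ T ∧ PQ.2.card = kT ∧
      (∀ n < 2 * PQ.1.card + 2 * PQ.2.card + 1, (partNat S T PQ.1 PQ.2 n).Nonempty) := by
  rw [goodPairs, mem_filter, mem_product, mem_powersetCard, mem_powersetCard]
  tauto

/-- The block associated to a good pair. -/
noncomputable def blockOfPair (S T : Finset ℕ) (hST : Disjoint S T) {kS kT r : ℕ}
    (hr : 2 * kS + 2 * kT + 1 = r) (x : {x // x ∈ goodPairs S T kS kT}) :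
    Block (S ∪ T) r where
  parts i := partNat S T x.1.1 x.1.2 i.val
  nonempty i := by
    obtain ⟨h1, h2, h3, h4, h5⟩ := goodPairs_mem.1 x.2
    exact h5 i.val (by have := i.isLt; omega)
  subset i := partNat_subset (goodPairs_mem.1 x.2).1 (goodPairs_mem.1 x.2).2.2.1 i.val
  disj i j hij := by
    obtain ⟨h1, h2, h3, h4, h5⟩ := goodPairs_mem.1 x.2
    exact partNat_disj h1 h3 hST (by have := i.isLt; omega) (by have := j.isLt; omega)
      (fun h => hij (Fin.ext h))

lemma edges_blockOfPair {S T : Finset ℕ} (hST : Disjoint S T) {kS kT r : ℕ}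
    (hr : 2 * kS + 2 * kT + 1 = r) (x : {x // x ∈ goodPairs S T kS kT}) {X : Finset ℕ} :
    X ∈ (blockOfPair S T hST hr x).edges ↔ EdgeCond S T x.1.1 x.1.2 X := by
  obtain ⟨h1, h2, h3, h4, h5⟩ := goodPairs_mem.1 x.2
  have hb : 2 * x.1.1.card + 2 * x.1.2.card + 1 = r := by omega
  rw [EdgeCond, ← edge_char h1 h3 hST]
  show ((∀ i : Fin r, _) ∧ _) ↔ _
  constructor
  · rintro ⟨e1, e2⟩
    refine ⟨fun n hn => e1 ⟨n, by omega⟩, fun y hy => ?_⟩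
    obtain ⟨i, hi⟩ := e2 y hy
    exact ⟨i.val, by have := i.isLt; omega, hi⟩
  · rintro ⟨e1, e2⟩
    refine ⟨fun i => e1 i.val (by have := i.isLt; omega), fun y hy => ?_⟩
    obtain ⟨n, hn, hmem⟩ := e2 y hy
    exact ⟨⟨n, by omega⟩, hmem⟩

lemma edgeCond_counts {S T P Q X : Finset ℕ} (hP : P ⊆ S) (hQ : Q ⊆ T)
    (h : EdgeCond S T P Q X) :
    Match (X ∩ S) P ∧ Match (X ∩ T) Q ∧
    (X ∩ S).card = 2 * P.card + ((X ∩ S) ∩ above S P).card ∧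
    (X ∩ T).card = 2 * Q.card + ((X ∩ T) ∩ above T Q).card := by
  obtain ⟨hXST, hSf, hTf, htail⟩ := h
  have hfitS : ∀ p ∈ P, p ∈ X ∩ S ∧ ((X ∩ S) ∩ gap S P p).card = 1 := by
    intro p hp
    exact ⟨mem_inter.2 ⟨(hSf p hp).1, hP hp⟩, (hSf p hp).2⟩
  have hfitT : ∀ q ∈ Q, q ∈ X ∩ T ∧ ((X ∩ T) ∩ gap T Q q).card = 1 := by
    intro q hq
    exact ⟨mem_inter.2 ⟨(hTf q hq).1, hQ hq⟩, (hTf q hq).2⟩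
  exact ⟨fit_match hP inter_subset_right hfitS, fit_match hQ inter_subset_right hfitT,
    fit_card hP inter_subset_right hfitS, fit_card hQ inter_subset_right hfitT⟩

lemma edgeCond_unique {S T P Q X : Finset ℕ} (hP : P ⊆ S) (hQ : Q ⊆ T)
    (h : EdgeCond S T P Q X) : P = evenPart (X ∩ S) ∧ Q = evenPart (X ∩ T) := by
  obtain ⟨hMS, hMT, hcS, hcT⟩ := edgeCond_counts hP hQ h
  have htail := h.2.2.2
  exact ⟨match_unique hMS (by omega), match_unique hMT (by omega)⟩

lemma family_edgeCond {S T X : Finset ℕ} (hXST : X ⊆ S ∪ T)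
    (hodd : (X ∩ S).card % 2 + (X ∩ T).card % 2 = 1) :
    EdgeCond S T (evenPart (X ∩ S)) (evenPart (X ∩ T)) X := by
  have hMS := match_evenPart (X ∩ S)
  have hMT := match_evenPart (X ∩ T)
  refine ⟨hXST, ?_, ?_, ?_⟩
  · intro p hp
    exact ⟨(mem_inter.1 (hMS p hp).1).1, match_gap_card inter_subset_right hMS hp⟩
  · intro q hq
    exact ⟨(mem_inter.1 (hMT q hq).1).1, match_gap_card inter_subset_right hMT hq⟩
  · have h1 := match_above_card (Z := S) inter_subset_right hMS
    have h2 := match_above_card (Z := T) inter_subset_right hMT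
    have e1 := card_evenPart (X ∩ S)
    have e2 := card_evenPart (X ∩ T)
    omega

theorem cover_mixed_family (S T : Finset ℕ) (hST : Disjoint S T) (a b : ℕ)
    (hae : Even a) (hbe : Even b) (haS : a + 1 ≤ S.card) (hbT : b + 1 ≤ T.card) :
    ∃ k ≤ S.card.choose (a / 2) * T.card.choose (b / 2),
      ExactCover (S ∪ T) (a + b + 1) k
        {X | X ⊆ S ∪ T ∧
          (((X ∩ S).card = a ∧ (X ∩ T).card = b + 1) ∨
           ((X ∩ S).card = a + 1 ∧ (X ∩ T).card = b))} := by
  classical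
  have ha2 : a % 2 = 0 := Nat.even_iff.mp hae
  have hb2 : b % 2 = 0 := Nat.even_iff.mp hbe
  have hr : 2 * (a / 2) + 2 * (b / 2) + 1 = a + b + 1 := by omega
  set D := goodPairs S T (a / 2) (b / 2) with hD
  refine ⟨D.card, ?_, ?_⟩
  · have h1 : D.card ≤ ((S.powersetCard (a / 2)) ×ˢ (T.powersetCard (b / 2))).card := by
      rw [hD, goodPairs]
      exact card_filter_le _ _
    rwa [card_product, card_powersetCard, card_powersetCard] at h1
  · refine ⟨fun i => blockOfPair S T hST hr (D.equivFin.symm i), ?_, ?_⟩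
    · intro i j hij
      rw [Set.disjoint_left]
      intro X hXi hXj
      rw [edges_blockOfPair] at hXi hXj
      have mx := goodPairs_mem.1 (D.equivFin.symm i).2
      have my := goodPairs_mem.1 (D.equivFin.symm j).2
      have ex := edgeCond_unique mx.1 mx.2.2.1 hXi
      have ey := edgeCond_unique my.1 my.2.2.1 hXj
      have hxy : D.equivFin.symm i = D.equivFin.symm j :=
        Subtype.ext (Prod.ext (by rw [ex.1, ey.1]) (by rw [ex.2, ey.2]))
      exact hij (D.equivFin.symm.injective hxy)
    · ext X
      simp only [Set.mem_iUnion, Set.mem_setOf_eq]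
      constructor
      · rintro ⟨i, hXi⟩
        rw [edges_blockOfPair] at hXi
        have mx := goodPairs_mem.1 (D.equivFin.symm i).2
        obtain ⟨hMS, hMT, hcS, hcT⟩ := edgeCond_counts mx.1 mx.2.2.1 hXi
        have htail := hXi.2.2.2
        refine ⟨hXi.1, ?_⟩
        rw [mx.2.1] at hcS
        rw [mx.2.2.2.1] at hcT
        omega
      · rintro ⟨hXST, hcards⟩
        have hodd : (X ∩ S).card % 2 + (X ∩ T).card % 2 = 1 := by
          rcases hcards with ⟨h1, h2⟩ | ⟨h1, h2⟩ <;> omega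
        have hEC := family_edgeCond hXST hodd
        have hPS : evenPart (X ∩ S) ⊆ S := (filter_subset _ _).trans inter_subset_right
        have hQT : evenPart (X ∩ T) ⊆ T := (filter_subset _ _).trans inter_subset_right
        have hPcard : (evenPart (X ∩ S)).card = a / 2 := by
          have := card_evenPart (X ∩ S)
          rcases hcards with ⟨h1, h2⟩ | ⟨h1, h2⟩ <;> omega
        have hQcard : (evenPart (X ∩ T)).card = b / 2 := by
          have := card_evenPart (X ∩ T)
          rcases hcards with ⟨h1, h2⟩ | ⟨h1, h2⟩ <;> omega
        have hne : ∀ n < 2 * (evenPart (X ∩ S)).card + 2 * (evenPart (X ∩ T)).card + 1,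
            (partNat S T (evenPart (X ∩ S)) (evenPart (X ∩ T)) n).Nonempty := by
          have hec := (edge_char hPS hQT hST).2 hEC
          intro n hn
          have h1 := hec.1 n hn
          have h2 : (X ∩ partNat S T (evenPart (X ∩ S)) (evenPart (X ∩ T)) n).Nonempty :=
            card_pos.1 (by omega)
          obtain ⟨y, hy⟩ := h2
          exact ⟨y, (mem_inter.1 hy).2⟩
        have hmem : (evenPart (X ∩ S), evenPart (X ∩ T)) ∈ D :=
          goodPairs_mem.2 ⟨hPS, hPcard, hQT, hQcard, hne⟩
        refine ⟨D.equivFin ⟨_, hmem⟩, ?_⟩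
        rw [show D.equivFin.symm (D.equivFin ⟨_, hmem⟩)
            = ⟨(evenPart (X ∩ S), evenPart (X ∩ T)), hmem⟩ from Equiv.symm_apply_apply _ _]
        rw [edges_blockOfPair]
        exact hEC
end
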